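/- Let Y(0), Y(1) ∈ [Y_L, Y_H] a.s., D(0), D(1) ∈ {0,1}, A ∈ {0,1} with (Y(0),Y(1),D(0),D(1)) ⊥ A given S for a finitely-valued S, and G = E[(D(1)−D(0))A + D(0)] > 0. Define υ = E[Y(1) − Y(0) | D = 1] where D = D(1)A + D(0)(1−A). Then G·υ = E[(Y(1)−Y(0))(D(1)−D(0))A + (Y(1)−Y(0))D(0)], and consequently υ ∈ [υ_L, υ_H] where G·υ_L = E[(Y(1)−Y(0))(D(1)−D(0))A + (Y(1)−Y_H)D(0)] and G·υ_H = E[(Y(1)−Y(0))(D(1)−D(0))A + (Y(1)−Y_L)D(0)]. -/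

import Mathlib

open MeasureTheory ProbabilityTheory

lemma int_bdd {Ω : Type*} [MeasurableSpace Ω] (μ : Measure Ω) [IsFiniteMeasure μ]
    {f : Ω → ℝ} (hf : Measurable f) {C : ℝ} (h : ∀ᵐ ω ∂μ, |f ω| ≤ C) :
    Integrable f μ :=
  ⟨hf.aestronglyMeasurable, HasFiniteIntegral.of_bounded (by simpa [Real.norm_eq_abs] using h)⟩

lemma abs_bound_helper (x y z u v C1 C2 : ℝ) (hx : |x| ≤ C1) (hy : |y| ≤ 1)
    (hz : |z| ≤ 1) (hu : |u| ≤ C2) (hv : |v| ≤ 1) : |x * y * z + u * v| ≤ C1 + C2 := by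
  have hyz : |y| * |z| ≤ 1 := mul_le_one₀ hy (abs_nonneg z) hz
  have h1 : |x * y * z| ≤ C1 := by
    rw [abs_mul, abs_mul, mul_assoc]
    exact le_trans (mul_le_of_le_one_right (abs_nonneg x) hyz) hx
  have h2 : |u * v| ≤ C2 := by
    rw [abs_mul]
    exact le_trans (mul_le_of_le_one_right (abs_nonneg u) hv) hu
  calc |x * y * z + u * v| ≤ |x * y * z| + |u * v| := abs_add_le _ _
    _ ≤ C1 + C2 := add_le_add h1 h2

theorem att_bounds
    {Ω 𝒮 : Type*} [MeasurableSpace Ω] [Fintype 𝒮]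
    (μ : Measure Ω) [IsProbabilityMeasure μ]
    (YL YH : ℝ) (Y0 Y1 D0 D1 A : Ω → ℝ) (S : Ω → 𝒮)
    (hmY0 : Measurable Y0) (hmY1 : Measurable Y1) (hmD0 : Measurable D0)
    (hmD1 : Measurable D1) (hmA : Measurable A)
    (hSmeas : ∀ s : 𝒮, MeasurableSet {ω | S ω = s})
    (hY0b : ∀ᵐ ω ∂μ, Y0 ω ∈ Set.Icc YL YH) (hY1b : ∀ᵐ ω ∂μ, Y1 ω ∈ Set.Icc YL YH)
    (hD0b : ∀ ω, D0 ω = 0 ∨ D0 ω = 1) (hD1b : ∀ ω, D1 ω = 0 ∨ D1 ω = 1)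
    (hAb : ∀ ω, A ω = 0 ∨ A ω = 1)
    (hindep : ∀ (s : 𝒮) (B : Set (ℝ × ℝ × ℝ × ℝ)), MeasurableSet B → ∀ a : ℝ,
      μ ({ω | (Y0 ω, Y1 ω, D0 ω, D1 ω) ∈ B} ∩ {ω | A ω = a} ∩ {ω | S ω = s})
          * μ {ω | S ω = s}
        = μ ({ω | (Y0 ω, Y1 ω, D0 ω, D1 ω) ∈ B} ∩ {ω | S ω = s})
            * μ ({ω | A ω = a} ∩ {ω | S ω = s}))
    (D : Ω → ℝ) (hD : D = fun ω => D1 ω * A ω + D0 ω * (1 - A ω))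
    (G : ℝ) (hG : G = ∫ ω, ((D1 ω - D0 ω) * A ω + D0 ω) ∂μ) (hGpos : 0 < G) :
    G * ∫ ω, (Y1 ω - Y0 ω) ∂(μ[|{ω | D ω = 1}])
        = ∫ ω, ((Y1 ω - Y0 ω) * (D1 ω - D0 ω) * A ω + (Y1 ω - Y0 ω) * D0 ω) ∂μ ∧
    (∫ ω, ((Y1 ω - Y0 ω) * (D1 ω - D0 ω) * A ω + (Y1 ω - YH) * D0 ω) ∂μ) / G
        ≤ ∫ ω, (Y1 ω - Y0 ω) ∂(μ[|{ω | D ω = 1}]) ∧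
    (∫ ω, (Y1 ω - Y0 ω) ∂(μ[|{ω | D ω = 1}]))
        ≤ (∫ ω, ((Y1 ω - Y0 ω) * (D1 ω - D0 ω) * A ω + (Y1 ω - YL) * D0 ω) ∂μ) / G := by
  have hmD : Measurable D := by
    subst hD
    exact (hmD1.mul hmA).add (hmD0.mul (measurable_const.sub hmA))
  set s : Set Ω := {ω | D ω = 1} with hs
  have hms : MeasurableSet s := hmD (measurableSet_singleton 1)
  have hDval : ∀ ω, D ω = 0 ∨ D ω = 1 := by
    intro ω
    rcases hAb ω with h | h <;> simp [hD, h] <;> [exact hD0b ω; exact hD1b ω]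
  have hkey : ∀ ω, (D1 ω - D0 ω) * A ω + D0 ω = D ω := fun ω => by rw [hD]; ring
  -- pointwise: middle integrand = (Y1-Y0)*D = indicator
  have hmid : ∀ ω, (Y1 ω - Y0 ω) * (D1 ω - D0 ω) * A ω + (Y1 ω - Y0 ω) * D0 ω
      = s.indicator (fun ω => Y1 ω - Y0 ω) ω := by
    intro ω
    have hk := hkey ω
    rcases hDval ω with h | h
    · rw [Set.indicator_of_notMem (by simp [hs, h])]
      rw [h] at hk
      linear_combination (Y1 ω - Y0 ω) * hk
    · rw [Set.indicator_of_mem (by simpa [hs] using h)]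
      rw [h] at hk
      linear_combination (Y1 ω - Y0 ω) * hk
  have hGeq : G = (μ s).toReal := by
    rw [hG]
    have : ∀ ω, (D1 ω - D0 ω) * A ω + D0 ω = s.indicator (fun _ => (1:ℝ)) ω := by
      intro ω
      have hk := hkey ω
      rcases hDval ω with h | h
      · rw [Set.indicator_of_notMem (by simp [hs, h])]; rw [h] at hk; linarith
      · rw [Set.indicator_of_mem (by simpa [hs] using h)]; rw [h] at hk; linarith
    rw [integral_congr_ae (Filter.Eventually.of_forall this), integral_indicator hms]
    simp
    rfl
  have hμs : (μ s).toReal ≠ 0 := by rw [← hGeq]; exact ne_of_gt hGpos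
  have hμsfin : μ s ≠ ⊤ := measure_ne_top μ s
  -- conditional integral
  have hcond : ∫ ω, (Y1 ω - Y0 ω) ∂(μ[|s])
      = (μ s).toReal⁻¹ * ∫ ω in s, (Y1 ω - Y0 ω) ∂μ := by
    rw [ProbabilityTheory.cond, integral_smul_measure, ENNReal.toReal_inv]
    rfl
  have hmideq : ∫ ω, ((Y1 ω - Y0 ω) * (D1 ω - D0 ω) * A ω + (Y1 ω - Y0 ω) * D0 ω) ∂μ
      = ∫ ω in s, (Y1 ω - Y0 ω) ∂μ := by
    rw [integral_congr_ae (Filter.Eventually.of_forall hmid), integral_indicator hms]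
  have hfirst : G * ∫ ω, (Y1 ω - Y0 ω) ∂(μ[|s])
      = ∫ ω, ((Y1 ω - Y0 ω) * (D1 ω - D0 ω) * A ω + (Y1 ω - Y0 ω) * D0 ω) ∂μ := by
    rw [hcond, hmideq, hGeq, ← mul_assoc, mul_inv_cancel₀ hμs, one_mul]
  refine ⟨hfirst, ?_, ?_⟩
  -- integrability of the three integrands
  all_goals {
    have habs : ∀ᵐ ω ∂μ, |Y1 ω - Y0 ω| ≤ YH - YL ∧ |Y1 ω - YH| ≤ YH - YL ∧
        |Y1 ω - YL| ≤ YH - YL := by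
      filter_upwards [hY0b, hY1b] with ω h0 h1
      obtain ⟨h0l, h0h⟩ := h0; obtain ⟨h1l, h1h⟩ := h1
      refine ⟨abs_le.2 ⟨by linarith, by linarith⟩, abs_le.2 ⟨by linarith, by linarith⟩,
        abs_le.2 ⟨by linarith, by linarith⟩⟩
    have h01 : ∀ ω, |D0 ω| ≤ 1 ∧ |D1 ω - D0 ω| ≤ 1 ∧ |A ω| ≤ 1 := by
      intro ω
      rcases hD0b ω with hd0 | hd0 <;> rcases hD1b ω with hd1 | hd1 <;>
        rcases hAb ω with ha | ha <;> norm_num [hd0, hd1, ha]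
    have hintM : Integrable (fun ω => (Y1 ω - Y0 ω) * (D1 ω - D0 ω) * A ω
        + (Y1 ω - Y0 ω) * D0 ω) μ := by
      apply int_bdd μ (by fun_prop) (C := (YH - YL) + (YH - YL))
      filter_upwards [habs] with ω ⟨h1, h2, h3⟩
      obtain ⟨p0, p1, pA⟩ := h01 ω
      exact abs_bound_helper _ _ _ _ _ _ _ h1 p1 pA h1 p0
    have hintL : Integrable (fun ω => (Y1 ω - Y0 ω) * (D1 ω - D0 ω) * A ω
        + (Y1 ω - YH) * D0 ω) μ := by
      apply int_bdd μ (by fun_prop) (C := (YH - YL) + (YH - YL))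
      filter_upwards [habs] with ω ⟨h1, h2, h3⟩
      obtain ⟨p0, p1, pA⟩ := h01 ω
      exact abs_bound_helper _ _ _ _ _ _ _ h1 p1 pA h2 p0
    have hintH : Integrable (fun ω => (Y1 ω - Y0 ω) * (D1 ω - D0 ω) * A ω
        + (Y1 ω - YL) * D0 ω) μ := by
      apply int_bdd μ (by fun_prop) (C := (YH - YL) + (YH - YL))
      filter_upwards [habs] with ω ⟨h1, h2, h3⟩
      obtain ⟨p0, p1, pA⟩ := h01 ω
      exact abs_bound_helper _ _ _ _ _ _ _ h1 p1 pA h3 p0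
    first
    | · -- lower bound
        rw [div_le_iff₀ hGpos]
        have hle : ∫ ω, ((Y1 ω - Y0 ω) * (D1 ω - D0 ω) * A ω + (Y1 ω - YH) * D0 ω) ∂μ
            ≤ ∫ ω, ((Y1 ω - Y0 ω) * (D1 ω - D0 ω) * A ω + (Y1 ω - Y0 ω) * D0 ω) ∂μ := by
          apply integral_mono_ae hintL hintM
          filter_upwards [hY0b] with ω ⟨_, h0h⟩
          rcases hD0b ω with hd0 | hd0 <;> simp [hd0] <;> nlinarith
        calc ∫ ω, ((Y1 ω - Y0 ω) * (D1 ω - D0 ω) * A ω + (Y1 ω - YH) * D0 ω) ∂μ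
            ≤ _ := hle
          _ = G * ∫ ω, (Y1 ω - Y0 ω) ∂(μ[|s]) := hfirst.symm
          _ = (∫ ω, (Y1 ω - Y0 ω) ∂(μ[|s])) * G := mul_comm _ _
    | · -- upper bound
        rw [le_div_iff₀ hGpos]
        have hle : ∫ ω, ((Y1 ω - Y0 ω) * (D1 ω - D0 ω) * A ω + (Y1 ω - Y0 ω) * D0 ω) ∂μ
            ≤ ∫ ω, ((Y1 ω - Y0 ω) * (D1 ω - D0 ω) * A ω + (Y1 ω - YL) * D0 ω) ∂μ := by
          apply integral_mono_ae hintM hintH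
          filter_upwards [hY0b] with ω ⟨h0l, _⟩
          rcases hD0b ω with hd0 | hd0 <;> simp [hd0] <;> nlinarith
        calc (∫ ω, (Y1 ω - Y0 ω) ∂(μ[|s])) * G
            = G * ∫ ω, (Y1 ω - Y0 ω) ∂(μ[|s]) := mul_comm _ _
          _ = _ := hfirst
          _ ≤ _ := hle
  }
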